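/- Let L/K be a finite Galois extension with Galois group G. The map M ↦ L⋊Gal(L/M) is an inclusion-reversing bijection from the set of intermediate fields of L/K to the set of K-subalgebras of End_K(L) containing L, with inverse A ↦ L^{A∩G}. -/

import Mathlib

open Module

namespace Stmt15Aux

variable (K L : Type) [Field K] [Field L] [Algebra K L]

/-- The map sending an automorphism to its linear map. -/
noncomputable abbrev toLin : (L ≃ₐ[K] L) → Module.End K L := fun g => g.toLinearMap

variable {K L}

lemma smul_eq_lmul_mul (a : L) (f : Module.End K L) :
    a • f = (Algebra.lmul K L a) * f := rfl

lemma toLin_mul (g h : L ≃ₐ[K] L) : toLin K L (g * h) = toLin K L g * toLin K L h := rfl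

lemma toLin_mul_lmul (g : L ≃ₐ[K] L) (a : L) :
    toLin K L g * Algebra.lmul K L a = (g a) • toLin K L g := by
  ext x
  simp [Algebra.lmul, smul_eq_mul, map_mul]

lemma li : LinearIndependent L (toLin K L) := by
  have h := (linearIndependent_algHom_toLinearMap K L L).comp
    ((↑) : (L ≃ₐ[K] L) → (L →ₐ[K] L)) AlgEquiv.coe_algHom_injective
  exact h

variable (K L) in
/-- Right multiplication by a fixed endomorphism, as an `L`-linear map. -/
noncomputable def mulRightL (y : Module.End K L) :
    Module.End K L →ₗ[L] Module.End K L where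
  toFun x := x * y
  map_add' x₁ x₂ := add_mul x₁ x₂ y
  map_smul' a x := rfl

/-- The `L`-span of the image of a subgroup `H`. -/
noncomputable def P (H : Subgroup (L ≃ₐ[K] L)) : Submodule L (Module.End K L) :=
  Submodule.span L (toLin K L '' (H : Set (L ≃ₐ[K] L)))

lemma mul_lmul_mem {H : Subgroup (L ≃ₐ[K] L)} {x : Module.End K L}
    (hx : x ∈ P H) (a : L) : x * Algebra.lmul K L a ∈ P H := by
  have : (P H).map (mulRightL K L (Algebra.lmul K L a)) ≤ P H := by
    rw [P, Submodule.map_span, Submodule.span_le]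
    rintro _ ⟨_, ⟨g, hg, rfl⟩, rfl⟩
    have : mulRightL K L (Algebra.lmul K L a) (toLin K L g) = (g a) • toLin K L g :=
      toLin_mul_lmul g a
    rw [this]
    exact Submodule.smul_mem _ _ (Submodule.subset_span ⟨g, hg, rfl⟩)
  exact this ⟨x, hx, rfl⟩

lemma mul_mem_P {H : Subgroup (L ≃ₐ[K] L)} {x y : Module.End K L}
    (hx : x ∈ P H) (hy : y ∈ P H) : x * y ∈ P H := by
  induction hy using Submodule.span_induction generalizing x with
  | mem z hz =>
    obtain ⟨g, hg, rfl⟩ := hz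
    have : (P H).map (mulRightL K L (toLin K L g)) ≤ P H := by
      rw [P, Submodule.map_span, Submodule.span_le]
      rintro _ ⟨_, ⟨g', hg', rfl⟩, rfl⟩
      exact Submodule.subset_span ⟨g' * g, H.mul_mem hg' hg, rfl⟩
    exact this ⟨x, hx, rfl⟩
  | zero => simpa using (P H).zero_mem
  | add y₁ y₂ _ _ ih₁ ih₂ => rw [mul_add]; exact (P H).add_mem (ih₁ hx) (ih₂ hx)
  | smul a y' _ ih =>
    have : x * (a • y') = (x * Algebra.lmul K L a) * y' := by
      ext z; simp [smul_eq_lmul_mul, mul_assoc]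
    rw [this]
    exact ih (mul_lmul_mem hx a)

lemma one_mem_P (H : Subgroup (L ≃ₐ[K] L)) : (1 : Module.End K L) ∈ P H :=
  Submodule.subset_span ⟨1, H.one_mem, rfl⟩

lemma lmul_mem_P (H : Subgroup (L ≃ₐ[K] L)) (a : L) : (Algebra.lmul K L a : Module.End K L) ∈ P H := by
  have : (Algebra.lmul K L a : Module.End K L) = a • 1 := by ext x; simp
  rw [this]
  exact Submodule.smul_mem _ _ (one_mem_P H)

lemma FA_aux (H : Subgroup (L ≃ₐ[K] L)) (k : K) :
    algebraMap K (Module.End K L) k ∈ P H := by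
  rw [Algebra.algebraMap_eq_smul_one]
  have h1 := (P H).smul_mem (algebraMap K L k) (one_mem_P H)
  rwa [algebraMap_smul] at h1

/-- The span `P H` as a `K`-subalgebra. -/
noncomputable def FA (K L : Type) [Field K] [Field L] [Algebra K L]
    (H : Subgroup (L ≃ₐ[K] L)) : Subalgebra K (Module.End K L) where
  carrier := (P H : Set (Module.End K L))
  add_mem' {a b} ha hb := (P H).add_mem ha hb
  mul_mem' {a b} ha hb := mul_mem_P ha hb
  algebraMap_mem' k := FA_aux H k

lemma mem_FA {H : Subgroup (L ≃ₐ[K] L)} {x : Module.End K L} :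
    x ∈ FA K L H ↔ x ∈ P H := Iff.rfl

/-- The adjoined algebra equals the span `P H`. -/
lemma adjoin_eq_FA (H : Subgroup (L ≃ₐ[K] L)) :
    Algebra.adjoin K (Set.range (Algebra.lmul K L) ∪
      toLin K L '' (H : Set (L ≃ₐ[K] L))) = FA K L H := by
  apply le_antisymm
  · apply Algebra.adjoin_le
    rintro x (⟨a, rfl⟩ | hx)
    · exact lmul_mem_P H a
    · exact Submodule.subset_span hx
  · intro x hx
    rw [mem_FA] at hx
    let A := Algebra.adjoin K (Set.range (Algebra.lmul K L) ∪
      toLin K L '' (H : Set (L ≃ₐ[K] L)))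
    let S : Submodule L (Module.End K L) :=
      { carrier := A
        add_mem' := fun h1 h2 => A.add_mem h1 h2
        zero_mem' := A.zero_mem
        smul_mem' := fun a y hy => by
          rw [smul_eq_lmul_mul]
          exact A.mul_mem (Algebra.subset_adjoin (Or.inl ⟨a, rfl⟩)) hy }
    have hPS : P H ≤ S := by
      rw [P, Submodule.span_le]
      intro y hy
      exact Algebra.subset_adjoin (Or.inr hy)
    exact hPS hx


section Galois

variable [FiniteDimensional K L]

noncomputable instance : Fintype (L ≃ₐ[K] L) := AlgEquiv.fintype K L

lemma card_eq [IsGalois K L] :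
    Fintype.card (L ≃ₐ[K] L) = finrank L (Module.End K L) := by
  have e : (Fin (finrank K L) → L) ≃ₗ[L] (L →ₗ[K] L) := (Module.finBasis K L).constr L
  rw [← Nat.card_eq_fintype_card, IsGalois.card_aut_eq_finrank, ← e.finrank_eq, Module.finrank_fin_fun]

variable [IsGalois K L]

/-- The Galois group as an `L`-basis of `End_K(L)`. -/
noncomputable def bG : Basis (L ≃ₐ[K] L) L (Module.End K L) :=
  haveI : Nonempty (L ≃ₐ[K] L) := ⟨1⟩
  basisOfLinearIndependentOfCardEqFinrank li card_eq

lemma bG_apply (g : L ≃ₐ[K] L) : (bG : Basis (L ≃ₐ[K] L) L (Module.End K L)) g = toLin K L g := by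
  haveI : Nonempty (L ≃ₐ[K] L) := ⟨1⟩
  exact congrFun (coe_basisOfLinearIndependentOfCardEqFinrank li card_eq) g

lemma repr_mul_lmul (b : L) (g : L ≃ₐ[K] L) (x : Module.End K L) :
    (bG.repr (x * Algebra.lmul K L b)) g = (bG.repr x) g * g b := by
  have h1 : (Finsupp.lapply g ∘ₗ ((bG (K := K) (L := L)).repr.toLinearMap ∘ₗ
        mulRightL K L (Algebra.lmul K L b)))
      = (g b) • (Finsupp.lapply g ∘ₗ (bG (K := K) (L := L)).repr.toLinearMap) := by
    apply Basis.ext (bG (K := K) (L := L))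
    intro h
    have h2 : mulRightL K L (Algebra.lmul K L b) (bG h) = (h b) • bG h := by
      show bG h * Algebra.lmul K L b = (h b) • bG h
      rw [bG_apply, toLin_mul_lmul]
    simp only [LinearMap.comp_apply, LinearMap.smul_apply, h2, map_smul,
      LinearEquiv.coe_toLinearMap, Basis.repr_self, Finsupp.lapply_apply,
      Finsupp.smul_apply, Finsupp.single_apply, smul_eq_mul]
    by_cases hgh : h = g
    · subst hgh; simp
    · simp [hgh]
  have h3 := DFunLike.congr_fun h1 x
  simp only [LinearMap.comp_apply, LinearMap.smul_apply, LinearEquiv.coe_toLinearMap,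
    Finsupp.lapply_apply, smul_eq_mul] at h3
  rw [show x * Algebra.lmul K L b = mulRightL K L (Algebra.lmul K L b) x from rfl, h3, mul_comm]

lemma repr_lmul_mul (b : L) (g : L ≃ₐ[K] L) (x : Module.End K L) :
    (bG.repr (Algebra.lmul K L b * x)) g = b * (bG.repr x) g := by
  rw [← smul_eq_lmul_mul, map_smul, Finsupp.smul_apply, smul_eq_mul]

/-- The subgroup of automorphisms lying in a subalgebra. -/
noncomputable def HA (A : Subalgebra K (Module.End K L)) : Subgroup (L ≃ₐ[K] L) where
  carrier := {g | toLin K L g ∈ A}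
  one_mem' := A.one_mem
  mul_mem' {g h} hg hh := A.mul_mem hg hh
  inv_mem' {g} hg := by
    have hpos : 0 < orderOf g := orderOf_pos g
    have h1 : g⁻¹ = g ^ (orderOf g - 1) := by
      apply eq_comm.mp
      apply eq_inv_of_mul_eq_one_left
      rw [← pow_succ, show orderOf g - 1 + 1 = orderOf g from Nat.succ_pred_eq_of_pos hpos,
        pow_orderOf_eq_one]
    show toLin K L g⁻¹ ∈ A
    rw [h1]
    show (g ^ (orderOf g - 1)).toLinearMap ∈ A
    rw [AlgEquiv.pow_toLinearMap]
    exact pow_mem hg _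

lemma key_induction (A : Subalgebra K (Module.End K L))
    (hA : (Algebra.lmul K L).range ≤ A) :
    ∀ (n : ℕ) (x : Module.End K L), x ∈ A → (bG.repr x).support.card ≤ n →
      ∀ g ∈ (bG.repr x).support, toLin K L g ∈ A := by
  classical
  intro n
  induction n with
  | zero =>
    intro x _ hcard g hg
    rw [Nat.le_zero, Finset.card_eq_zero] at hcard
    rw [hcard] at hg
    exact absurd hg (Finset.notMem_empty g)
  | succ n ih =>
    intro x hx hcard g hg
    by_cases hsub : (bG.repr x).support ⊆ {g}
    · -- x = c • toLin g with c ≠ 0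
      have hc : (bG.repr x) g ≠ 0 := Finsupp.mem_support_iff.mp hg
      have hxg : x = (bG.repr x g) • toLin K L g := by
        conv_lhs => rw [← bG.sum_repr x]
        rw [Finset.sum_eq_single g
          (fun i _ hig => by
            have : (bG.repr x) i = 0 := by
              by_contra h0
              exact hig (Finset.mem_singleton.mp (hsub (Finsupp.mem_support_iff.mpr h0)))
            rw [this, zero_smul])
          (fun h => absurd (Finset.mem_univ g) h), bG_apply]
      set c := (bG.repr x) g with hcdef
      have htoLin : toLin K L g = c⁻¹ • x := by
        rw [hxg, smul_smul, inv_mul_cancel₀ hc, one_smul]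
      rw [htoLin, smul_eq_lmul_mul]
      exact A.mul_mem (hA ⟨_, rfl⟩) hx
    · -- there is g2 in the support with g2 ≠ g
      obtain ⟨g2, hg2, hg2g⟩ : ∃ g2 ∈ (bG.repr x).support, g2 ≠ g := by
        by_contra hcon
        push_neg at hcon
        exact hsub fun y hy => Finset.mem_singleton.mpr (hcon y hy)
      obtain ⟨b, hb⟩ : ∃ b : L, g b ≠ g2 b := by
        by_contra hcon
        push_neg at hcon
        exact hg2g (AlgEquiv.ext fun z => (hcon z).symm)
      set x' := x * Algebra.lmul K L b - Algebra.lmul K L (g2 b) * x with hx'def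
      have hx' : x' ∈ A :=
        A.sub_mem (A.mul_mem hx (hA ⟨b, rfl⟩)) (A.mul_mem (hA ⟨g2 b, rfl⟩) hx)
      have hrepr : ∀ g' : L ≃ₐ[K] L,
          (bG.repr x') g' = (bG.repr x) g' * (g' b - g2 b) := by
        intro g'
        rw [hx'def, map_sub, Finsupp.sub_apply, repr_mul_lmul, repr_lmul_mul,
          mul_sub, mul_comm (g2 b)]
      have hsupp : (bG.repr x').support ⊆ (bG.repr x).support.erase g2 := by
        intro y hy
        rw [Finsupp.mem_support_iff, hrepr] at hy
        rw [Finset.mem_erase, Finsupp.mem_support_iff]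
        constructor
        · rintro rfl; exact hy (by ring)
        · exact fun h0 => hy (by rw [h0, zero_mul])
      have hcard' : (bG.repr x').support.card ≤ n := by
        calc (bG.repr x').support.card ≤ ((bG.repr x).support.erase g2).card :=
              Finset.card_le_card hsupp
        _ = (bG.repr x).support.card - 1 := Finset.card_erase_of_mem hg2
        _ ≤ n := by omega
      have hgx' : g ∈ (bG.repr x').support := by
        rw [Finsupp.mem_support_iff, hrepr]
        exact mul_ne_zero (Finsupp.mem_support_iff.mp hg) (sub_ne_zero_of_ne hb)
      exact ih x' hx' hcard' g hgx'

lemma mem_P_of_mem (A : Subalgebra K (Module.End K L))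
    (hA : (Algebra.lmul K L).range ≤ A) {x : Module.End K L} (hx : x ∈ A) :
    x ∈ P (HA A) := by
  classical
  have hsum := bG.sum_repr x
  rw [← hsum]
  apply Submodule.sum_mem
  intro g _
  by_cases hg : (bG.repr x) g = 0
  · rw [hg, zero_smul]; exact (P (HA A)).zero_mem
  · apply Submodule.smul_mem
    rw [bG_apply]
    refine Submodule.subset_span ⟨g, ?_, rfl⟩
    exact key_induction A hA _ x hx le_rfl g (Finsupp.mem_support_iff.mpr hg)

end Galois

end Stmt15Aux

open Stmt15Aux

/-- Let `L/K` be a finite Galois extension with Galois group `G`.  The map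
`M ↦ L⋊Gal(L/M)` is an inclusion-reversing bijection from intermediate fields of `L/K`
onto the `K`-subalgebras of `End_K(L)` containing (the image of) `L`, with inverse
`A ↦ L^{A∩G}`. -/
theorem stmt15 (K L : Type) [Field K] [Field L] [Algebra K L] [FiniteDimensional K L]
    [IsGalois K L] :
    letI F : IntermediateField K L → Subalgebra K (Module.End K L) := fun M =>
      Algebra.adjoin K (Set.range (Algebra.lmul K L) ∪
        (fun g : L ≃ₐ[K] L => (g.toLinearMap : Module.End K L)) ''
          (M.fixingSubgroup : Set (L ≃ₐ[K] L)))
    -- the map lands in subalgebras containing `L`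
    (∀ M : IntermediateField K L, (Algebra.lmul K L).range ≤ F M) ∧
    -- `A ↦ L^{A∩G}` is a left inverse
    (∀ M : IntermediateField K L,
        {l : L | ∀ g : L ≃ₐ[K] L, (g.toLinearMap : Module.End K L) ∈ F M → g l = l} =
          (M : Set L)) ∧
    -- surjectivity onto the subalgebras containing `L`
    (∀ A : Subalgebra K (Module.End K L), (Algebra.lmul K L).range ≤ A →
        ∃ M : IntermediateField K L, F M = A) ∧
    -- the bijection is inclusion-reversing
    (∀ M M' : IntermediateField K L, M ≤ M' → F M' ≤ F M) := by
  refine ⟨?_, ?_, ?_, ?_⟩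
  · -- contains L
    intro M f hf
    obtain ⟨a, rfl⟩ := hf
    exact Algebra.subset_adjoin (Or.inl ⟨a, rfl⟩)
  · -- left inverse
    intro M
    ext l
    simp only [Set.mem_setOf_eq, SetLike.mem_coe]
    constructor
    · intro hl
      have h1 : ∀ h ∈ M.fixingSubgroup, h l = l := fun h hh =>
        hl h (Algebra.subset_adjoin (Or.inr ⟨h, hh, rfl⟩))
      have h2 : l ∈ IntermediateField.fixedField M.fixingSubgroup := fun g => h1 g g.2
      rwa [IsGalois.fixedField_fixingSubgroup M] at h2
    · intro hl g hg
      rw [adjoin_eq_FA, mem_FA] at hg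
      by_cases hgH : g ∈ M.fixingSubgroup
      · exact (IntermediateField.mem_fixingSubgroup_iff M g).mp hgH l hl
      · exact absurd hg (li.notMem_span_image hgH)
  · -- surjectivity
    intro A hA
    refine ⟨IntermediateField.fixedField (HA A), ?_⟩
    beta_reduce
    rw [show (IntermediateField.fixedField (HA A)).fixingSubgroup = HA A from
      IntermediateField.fixingSubgroup_fixedField (HA A), adjoin_eq_FA]
    apply le_antisymm
    · intro x hx
      rw [mem_FA] at hx
      let SA : Submodule L (Module.End K L) :=
        { carrier := A
          add_mem' := fun h1 h2 => A.add_mem h1 h2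
          zero_mem' := A.zero_mem
          smul_mem' := fun a y hy => by
            rw [smul_eq_lmul_mul]
            exact A.mul_mem (hA ⟨a, rfl⟩) hy }
      have hle : P (HA A) ≤ SA := by
        rw [P, Submodule.span_le]
        rintro _ ⟨g, hgH, rfl⟩
        exact hgH
      exact hle hx
    · intro x hx
      exact mem_P_of_mem A hA hx
  · -- inclusion-reversing
    intro M M' h
    apply Algebra.adjoin_mono
    apply Set.union_subset_union_right
    exact Set.image_mono (IntermediateField.fixingSubgroup_antitone h)
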